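/- arXiv:0901.2588 — 5 statements merged into one kernel-verified Lean document; each statement's English description precedes it below -/
import Mathlib

section
/- Let K ≥ 1 and M be integers with M ≥ 2K, and let r ∈ [0, 1/2]. Then the static time allocation a = 1/2 satisfies the balancing condition of Theorem 1, namely d^MAC-sym_{2K,1,M}(r/(1/2)) = d^MAC-sym_{K,1,M}(r/(1 − 1/2)), and the common value equals the converse bound: d^MAC-sym_{2K,1,M}(2r) = d^MAC-sym_{K,1,M}(2r) = M(1 − 2r) = M(1 − 2r)^+. (This is the matching of the lower and upper bounds in Theorem 1 when the relay has at least 2K antennas.) -/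
/-- The Zheng–Tse point-to-point DMT curve for `m` transmit and `n` receive antennas:
piecewise-linear interpolation of the points `(k, (m-k)(n-k))`, extended by `0`
for `r ≥ min m n`. -/
noncomputable def dPPC (m n : ℕ) (r : ℝ) : ℝ :=
  if min (m : ℝ) (n : ℝ) ≤ r then 0
  else ((m : ℝ) - (⌊r⌋ : ℝ)) * ((n : ℝ) - (⌊r⌋ : ℝ))
    - (r - (⌊r⌋ : ℝ)) * ((m : ℝ) + (n : ℝ) - 2 * (⌊r⌋ : ℝ) - 1)

/-- The symmetric-MAC DMT curve for `N` users, each with `m` antennas, and an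
`n`-antenna receiver. -/
noncomputable def dMACsym (N m n : ℕ) (r : ℝ) : ℝ :=
  if r ≤ min (m : ℝ) ((n : ℝ) / ((N : ℝ) + 1)) then dPPC m n r
  else dPPC (N * m) n ((N : ℝ) * r)

lemma dPPC_one (M : ℕ) (hM : 1 ≤ M) (s : ℝ) (hs0 : 0 ≤ s) (hs1 : s ≤ 1) :
    dPPC 1 M s = (M : ℝ) * (1 - s) := by
  have hM1 : (1 : ℝ) ≤ (M : ℝ) := by exact_mod_cast hM
  rcases lt_or_eq_of_le hs1 with h | h
  · unfold dPPC
    rw [if_neg, Int.floor_eq_zero_iff.mpr ⟨hs0, h⟩]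
    · push_cast; ring
    · push_neg
      calc s < 1 := h
        _ ≤ min ((1:ℕ) : ℝ) (M : ℝ) := by simp [le_min_iff, hM1]
  · unfold dPPC
    rw [if_pos]
    · rw [h]; ring
    · rw [h]; simp [le_min_iff, hM1]

/-- for `K ≥ 1`, `M ≥ 2K` and `r ∈ [0, 1/2]`, the static time allocation
`a = 1/2` balances the two phases of the DF-MAC-BC scheme,
`d^MAC-sym_{2K,1,M}(r/(1/2)) = d^MAC-sym_{K,1,M}(r/(1-1/2))`, and the common value
equals the converse bound `M(1-2r) = M(1-2r)⁺`. -/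
theorem stmt0 (K M : ℕ) (hK : 1 ≤ K) (hM : 2 * K ≤ M) (r : ℝ)
    (hr0 : 0 ≤ r) (hr1 : r ≤ 1 / 2) :
    dMACsym (2 * K) 1 M (r / (1 / 2)) = dMACsym K 1 M (r / (1 - 1 / 2)) ∧
    dMACsym (2 * K) 1 M (2 * r) = (M : ℝ) * (1 - 2 * r) ∧
    dMACsym K 1 M (2 * r) = (M : ℝ) * (1 - 2 * r) ∧
    (M : ℝ) * (1 - 2 * r) = max ((M : ℝ) * (1 - 2 * r)) 0 := by
  have e1 : r / (1 / 2) = 2 * r := by ring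
  have e2 : r / (1 - 1 / 2) = 2 * r := by ring
  have h2r0 : 0 ≤ 2 * r := by linarith
  have h2r1 : 2 * r ≤ 1 := by linarith
  have hM1 : 1 ≤ M := by omega
  -- K side
  have hKside : dMACsym K 1 M (2 * r) = (M : ℝ) * (1 - 2 * r) := by
    unfold dMACsym
    rw [if_pos, dPPC_one M hM1 _ h2r0 h2r1]
    have hK1 : ((K : ℝ) + 1) ≤ (M : ℝ) := by
      have : K + 1 ≤ M := by omega
      exact_mod_cast this
    have hpos : (0 : ℝ) < (K : ℝ) + 1 := by positivity
    have hdiv : (1 : ℝ) ≤ (M : ℝ) / ((K : ℝ) + 1) := by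
      rw [le_div_iff₀ hpos]; linarith
    simp only [Nat.cast_one, le_min_iff]
    exact ⟨h2r1, h2r1.trans hdiv⟩
  -- 2K side
  have h2Kside : dMACsym (2 * K) 1 M (2 * r) = (M : ℝ) * (1 - 2 * r) := by
    unfold dMACsym
    by_cases hc : 2 * r ≤ min ((1:ℕ) : ℝ) ((M : ℝ) / (((2 * K : ℕ) : ℝ) + 1))
    · rw [if_pos hc, dPPC_one M hM1 _ h2r0 h2r1]
    · rw [if_neg hc]
      push_neg at hc
      have hKpos : (0 : ℝ) < (K : ℝ) := by exact_mod_cast hK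
      have hpos : (0 : ℝ) < ((2 * K : ℕ) : ℝ) + 1 := by positivity
      have hlt : (M : ℝ) / (((2 * K : ℕ) : ℝ) + 1) < 2 * r := by
        rcases min_lt_iff.mp hc with h | h
        · norm_num at h; linarith
        · exact h
      have hMlt : (M : ℝ) < ((2 * K : ℕ) : ℝ) + 1 := by
        have h1 := hlt.trans_le h2r1
        rwa [div_lt_one hpos] at h1
      have hMeq : M = 2 * K := by
        have : (M : ℝ) < ((2 * K : ℕ) : ℝ) + 1 := hMlt
        have : M < 2 * K + 1 := by exact_mod_cast this
        omega
      subst hMeq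
      -- from hlt : 2K/(2K+1) < 2r we get 2K < 2r*(2K+1)
      have hmul : ((2 * K : ℕ) : ℝ) < 2 * r * (((2 * K : ℕ) : ℝ) + 1) := by
        rwa [div_lt_iff₀ hpos] at hlt
      rcases lt_or_eq_of_le h2r1 with hlt1 | heq
      · -- 2r < 1 : floor of t = 2K·2r is 2K-1
        have ht1 : (((2 * K : ℕ) : ℝ)) - 1 ≤ ((2 * K : ℕ) : ℝ) * (2 * r) := by
          nlinarith
        have ht2 : ((2 * K : ℕ) : ℝ) * (2 * r) < ((2 * K : ℕ) : ℝ) := by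
          push_cast
          nlinarith
        have hfl : ⌊((2 * K : ℕ) : ℝ) * (2 * r)⌋ = 2 * (K : ℤ) - 1 := by
          rw [Int.floor_eq_iff]
          constructor
          · push_cast; push_cast at ht1; linarith
          · push_cast; push_cast at ht2; linarith
        unfold dPPC
        rw [if_neg, hfl]
        · push_cast; ring
        · push_neg
          rw [lt_min_iff]
          constructor
          · push_cast; push_cast at ht2; linarith
          · push_cast; push_cast at ht2; linarith
      · -- 2r = 1
        unfold dPPC
        rw [if_pos]
        · rw [heq]; ring
        · rw [heq]
          push_cast
          norm_num
  refine ⟨?_, h2Kside, hKside, ?_⟩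
  · rw [e1, e2, h2Kside, hKside]
  · exact (max_eq_left (mul_nonneg (Nat.cast_nonneg M) (by linarith))).symm
end

section
/- Let M be a positive integer and let X be a nonnegative random variable whose law is Gamma(M, 1). For every r with 0 < r < 1/2, lim_{ρ→∞} log P( log(1 + ρX) < 2r log ρ ) / log ρ = −M(1 − 2r). (This is the high-SNR outage probability exponent computation which establishes the converse bound d(r) ≤ M(1 − 2r)^+ of Theorem 1 for the scalar-user reciprocal MIMO switch channel, since the end-to-end mutual information with optimal time allocation a = 1/2 equals half of log(1 + ρ‖H‖²) and ‖H‖² for an M-dimensional i.i.d. standard complex Gaussian vector H has law Gamma(M,1).) -/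
open MeasureTheory ProbabilityTheory Filter

section stmt2Aux

open Set Real

private lemma stmt2_gamma_form (M : ℕ) (hM : 1 ≤ M) {x : ℝ} (hx : 0 < x) :
    gammaPDFReal (M : ℝ) 1 x = (Real.Gamma M)⁻¹ * (x ^ (M - 1) * Real.exp (-x)) := by
  have hcast : (M : ℝ) - 1 = ((M - 1 : ℕ) : ℝ) := by
    push_cast [Nat.cast_sub hM]; ring
  simp only [gammaPDFReal, if_pos hx.le, one_mul, Real.one_rpow, hcast,
    Real.rpow_natCast]
  ring

private lemma stmt2_gamma_intOn (M : ℕ) (hM : 1 ≤ M) (t : ℝ) :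
    IntegrableOn (gammaPDFReal (M : ℝ) 1) (Ioo 0 t) := by
  apply IntegrableOn.congr_fun (f := fun x => (Real.Gamma M)⁻¹ * (x ^ (M - 1) * Real.exp (-x)))
  · exact ((continuous_const.mul ((continuous_pow _).mul
      (Real.continuous_exp.comp continuous_neg))).integrableOn_Icc (a := 0) (b := t)).mono_set
      Ioo_subset_Icc_self
  · exact fun x hx => (stmt2_gamma_form M hM hx.1).symm
  · exact measurableSet_Ioo

private lemma stmt2_gamma_int (M : ℕ) (hM : 1 ≤ M) {t : ℝ} (ht : 0 < t) :
    (gammaMeasure (M : ℝ) 1 (Iio t)).toReal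
      = ∫ x in Ioo 0 t, gammaPDFReal (M : ℝ) 1 x := by
  have hM0 : (0:ℝ) < (M:ℝ) := by positivity
  rw [gammaMeasure, withDensity_apply _ measurableSet_Iio]
  simp only [gammaPDF]
  rw [← integral_eq_lintegral_of_nonneg_ae
    (ae_of_all _ fun b => gammaPDFReal_nonneg hM0 one_pos b)
    (measurable_gammaPDFReal _ _).aestronglyMeasurable.restrict]
  have hsplit : Iio t = Iic 0 ∪ Ioo 0 t := (Set.Iic_union_Ioo_eq_Iio ht).symm
  have hne : ∀ᵐ x ∂(volume : Measure ℝ), x ≠ 0 := by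
    rw [ae_iff]; simp [show {x : ℝ | ¬x ≠ 0} = {0} by ext x; simp]
  have hIic0 : ∀ᵐ x ∂(volume : Measure ℝ), x ∈ Iic (0:ℝ) → gammaPDFReal (M : ℝ) 1 x = 0 := by
    filter_upwards [hne] with x hx hmem
    have : x < 0 := lt_of_le_of_ne hmem hx
    simp [gammaPDFReal, not_le.mpr this]
  have hIic : ∀ᵐ x ∂((volume : Measure ℝ).restrict (Iic 0)), gammaPDFReal (M : ℝ) 1 x = 0 :=
    (ae_restrict_iff' measurableSet_Iic).mpr hIic0
  have hInt0 : IntegrableOn (gammaPDFReal (M : ℝ) 1) (Iic 0) :=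
    (integrable_zero _ _ _).congr (by filter_upwards [hIic] with x hx; exact hx.symm)
  have hdisj : Disjoint (Iic (0:ℝ)) (Ioo 0 t) := by
    rw [Set.disjoint_left]
    rintro a ha ⟨h1, h2⟩
    exact absurd ha (not_le.mpr h1)
  rw [hsplit, setIntegral_union hdisj measurableSet_Ioo hInt0 (stmt2_gamma_intOn M hM t)]
  rw [setIntegral_congr_ae measurableSet_Iic
    (by filter_upwards [hIic0] with x hx _; exact hx ‹_›)]
  simp

private lemma stmt2_pow_int (M : ℕ) (hM : 1 ≤ M) {t : ℝ} (ht : 0 < t) (c : ℝ) :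
    ∫ x in Ioo 0 t, c * x ^ (M - 1) = c * (t ^ M / M) := by
  rw [← integral_Ioc_eq_integral_Ioo, ← intervalIntegral.integral_of_le ht.le,
    intervalIntegral.integral_const_mul, integral_pow,
    Nat.sub_add_cancel hM, zero_pow (by omega : M ≠ 0), sub_zero]
  have : ((M - 1 : ℕ) : ℝ) + 1 = (M : ℝ) := by push_cast [Nat.cast_sub hM]; ring
  rw [this]

private lemma stmt2_gamma_bounds (M : ℕ) (hM : 1 ≤ M) {t : ℝ} (ht : 0 < t) :
    Real.exp (-t) * (t ^ M / (M * Real.Gamma M))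
        ≤ (gammaMeasure (M : ℝ) 1 (Iio t)).toReal ∧
      (gammaMeasure (M : ℝ) 1 (Iio t)).toReal ≤ t ^ M / (M * Real.Gamma M) := by
  have hInt := stmt2_gamma_int M hM ht
  have hG : 0 < Real.Gamma M := Real.Gamma_pos_of_pos (by positivity)
  have hM0 : (0:ℝ) < M := by positivity
  have hIntU : IntegrableOn (fun x : ℝ => (Real.Gamma M)⁻¹ * x ^ (M - 1)) (Ioo 0 t) :=
    ((continuous_const.mul (continuous_pow _)).integrableOn_Icc (a := 0) (b := t)).mono_set
      Ioo_subset_Icc_self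
  have hIntL : IntegrableOn
      (fun x : ℝ => Real.exp (-t) * ((Real.Gamma M)⁻¹ * x ^ (M - 1))) (Ioo 0 t) :=
    ((continuous_const.mul (continuous_const.mul (continuous_pow _))).integrableOn_Icc
      (a := 0) (b := t)).mono_set Ioo_subset_Icc_self
  constructor
  · rw [hInt]
    have h1 : ∫ x in Ioo 0 t, Real.exp (-t) * ((Real.Gamma M)⁻¹ * x ^ (M - 1))
        ≤ ∫ x in Ioo 0 t, gammaPDFReal (M : ℝ) 1 x := by
      apply setIntegral_mono_on hIntL (stmt2_gamma_intOn M hM t) measurableSet_Ioo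
      intro x hx
      rw [stmt2_gamma_form M hM hx.1]
      have hee : Real.exp (-t) ≤ Real.exp (-x) := Real.exp_le_exp.mpr (by linarith [hx.2])
      have hxp : (0:ℝ) ≤ x ^ (M - 1) := pow_nonneg hx.1.le _
      calc Real.exp (-t) * ((Real.Gamma M)⁻¹ * x ^ (M - 1))
          = (Real.Gamma M)⁻¹ * (x ^ (M - 1) * Real.exp (-t)) := by ring
        _ ≤ (Real.Gamma M)⁻¹ * (x ^ (M - 1) * Real.exp (-x)) := by gcongr
    have h2 : ∫ x in Ioo 0 t, Real.exp (-t) * ((Real.Gamma M)⁻¹ * x ^ (M - 1))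
        = Real.exp (-t) * (t ^ M / (M * Real.Gamma M)) := by
      simp_rw [← mul_assoc]
      rw [stmt2_pow_int M hM ht]
      field_simp
    linarith
  · rw [hInt]
    have h1 : ∫ x in Ioo 0 t, gammaPDFReal (M : ℝ) 1 x
        ≤ ∫ x in Ioo 0 t, (Real.Gamma M)⁻¹ * x ^ (M - 1) := by
      apply setIntegral_mono_on (stmt2_gamma_intOn M hM t) hIntU measurableSet_Ioo
      intro x hx
      rw [stmt2_gamma_form M hM hx.1]
      have hxp : (0:ℝ) ≤ x ^ (M - 1) := pow_nonneg hx.1.le _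
      have hee : Real.exp (-x) ≤ 1 := Real.exp_le_one_iff.mpr (by linarith [hx.1])
      calc (Real.Gamma M)⁻¹ * (x ^ (M - 1) * Real.exp (-x))
          ≤ (Real.Gamma M)⁻¹ * (x ^ (M - 1) * 1) := by gcongr
        _ = (Real.Gamma M)⁻¹ * x ^ (M - 1) := by ring
    have h2 : ∫ x in Ioo 0 t, (Real.Gamma M)⁻¹ * x ^ (M - 1)
        = t ^ M / (M * Real.Gamma M) := by
      rw [stmt2_pow_int M hM ht]
      field_simp
    linarith

private lemma stmt2_t_tendsto (r : ℝ) (hr0 : 0 < r) (hr1 : r < 1/2) :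
    Tendsto (fun ρ : ℝ => (ρ ^ (2*r) - 1)/ρ) atTop (nhds 0) := by
  have hneg : (0:ℝ) < 1 - 2*r := by linarith
  have h1 : Tendsto (fun ρ : ℝ => ρ ^ (-(1 - 2*r))) atTop (nhds 0) :=
    tendsto_rpow_neg_atTop hneg
  apply tendsto_of_tendsto_of_tendsto_of_le_of_le' tendsto_const_nhds h1
  · filter_upwards [eventually_gt_atTop (1:ℝ)] with ρ hρ
    have hρ0 : (0:ℝ) < ρ := by linarith
    have hA : 1 < ρ ^ (2*r) := Real.one_lt_rpow_iff_of_pos hρ0 |>.mpr (Or.inl ⟨hρ, by linarith⟩)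
    exact div_nonneg (by linarith) hρ0.le
  · filter_upwards [eventually_gt_atTop (1:ℝ)] with ρ hρ
    have hρ0 : (0:ℝ) < ρ := by linarith
    have : ρ ^ (-(1 - 2*r)) = ρ ^ (2*r) / ρ := by
      rw [show -(1 - 2*r) = 2*r - 1 by ring, Real.rpow_sub hρ0, Real.rpow_one]
    rw [this]
    gcongr
    linarith

private lemma stmt2_logt_tendsto (r : ℝ) (hr0 : 0 < r) (hr1 : r < 1/2) :
    Tendsto (fun ρ : ℝ => Real.log ((ρ ^ (2*r) - 1)/ρ) / Real.log ρ) atTop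
      (nhds (2*r - 1)) := by
  have h1 : Tendsto (fun ρ : ℝ => ρ ^ (-(2*r))) atTop (nhds 0) :=
    tendsto_rpow_neg_atTop (by positivity)
  have h2 : Tendsto (fun ρ : ℝ => 1 - ρ ^ (-(2*r))) atTop (nhds 1) := by
    simpa using tendsto_const_nhds.sub h1
  have h3 : Tendsto (fun ρ : ℝ => Real.log (1 - ρ ^ (-(2*r)))) atTop (nhds 0) := by
    have := (Real.continuousAt_log one_ne_zero).tendsto.comp h2
    simpa [Function.comp_def] using this
  have hinv : Tendsto (fun ρ : ℝ => (Real.log ρ)⁻¹) atTop (nhds 0) :=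
    tendsto_inv_atTop_zero.comp Real.tendsto_log_atTop
  have key : Tendsto (fun ρ : ℝ =>
      (2*r - 1) + Real.log (1 - ρ ^ (-(2*r))) * (Real.log ρ)⁻¹) atTop (nhds (2*r - 1)) := by
    simpa using tendsto_const_nhds.add (h3.mul hinv)
  apply key.congr'
  filter_upwards [eventually_gt_atTop (1:ℝ)] with ρ hρ
  have hρ0 : (0:ℝ) < ρ := by linarith
  have hlρ : 0 < Real.log ρ := Real.log_pos hρ
  have hA : 1 < ρ ^ (2*r) := Real.one_lt_rpow_iff_of_pos hρ0 |>.mpr (Or.inl ⟨hρ, by linarith⟩)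
  have hA0 : (0:ℝ) < ρ ^ (2*r) := by linarith
  have hinveq : ρ ^ (-(2*r)) = (ρ ^ (2*r))⁻¹ := Real.rpow_neg hρ0.le _
  have hfac : ρ ^ (2*r) - 1 = ρ ^ (2*r) * (1 - ρ ^ (-(2*r))) := by
    rw [hinveq, mul_sub, mul_inv_cancel₀ hA0.ne', mul_one]
  have hpos2 : 0 < 1 - ρ ^ (-(2*r)) := by
    rw [hinveq]
    have : (ρ ^ (2*r))⁻¹ < 1 := inv_lt_one_of_one_lt₀ hA
    linarith
  have hlogt : Real.log ((ρ ^ (2*r) - 1)/ρ)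
      = 2*r * Real.log ρ + Real.log (1 - ρ ^ (-(2*r))) - Real.log ρ := by
    rw [Real.log_div (by nlinarith) hρ0.ne', hfac,
      Real.log_mul hA0.ne' hpos2.ne', Real.log_rpow hρ0]
  rw [hlogt]
  field_simp
  ring

end stmt2Aux

/-- if `X ≥ 0` has law `Gamma(M, 1)`, then for `0 < r < 1/2` the outage
probability `P(log(1 + ρX) < 2r log ρ)` has high-SNR exponential order `-M(1 - 2r)`:
`lim_{ρ→∞} log P(log(1+ρX) < 2r log ρ) / log ρ = -M(1-2r)`. -/
theorem stmt2 (M : ℕ) (hM : 1 ≤ M) (r : ℝ) (hr0 : 0 < r) (hr1 : r < 1 / 2)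
    (Ω : Type*) [MeasureSpace Ω] [IsProbabilityMeasure (ℙ : Measure Ω)]
    (X : Ω → ℝ) (hXmeas : Measurable X) (hXpos : ∀ ω, 0 ≤ X ω)
    (hlaw : Measure.map X ℙ = gammaMeasure (M : ℝ) 1) :
    Tendsto
      (fun ρ : ℝ =>
        Real.log (ℙ {ω | Real.log (1 + ρ * X ω) < 2 * r * Real.log ρ}).toReal
          / Real.log ρ)
      atTop (nhds (-((M : ℝ) * (1 - 2 * r)))) := by
  set C : ℝ := (M : ℝ) * Real.Gamma M with hCdef
  have hM0 : (0:ℝ) < (M:ℝ) := by positivity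
  have hG : 0 < Real.Gamma M := Real.Gamma_pos_of_pos hM0
  have hC0 : 0 < C := mul_pos hM0 hG
  set t : ℝ → ℝ := fun ρ => (ρ ^ (2*r) - 1)/ρ with htdef
  have ht0 : Tendsto t atTop (nhds 0) := stmt2_t_tendsto r hr0 hr1
  have hlogt : Tendsto (fun ρ => Real.log (t ρ) / Real.log ρ) atTop (nhds (2*r - 1)) :=
    stmt2_logt_tendsto r hr0 hr1
  have hinv : Tendsto (fun ρ : ℝ => (Real.log ρ)⁻¹) atTop (nhds 0) :=
    tendsto_inv_atTop_zero.comp Real.tendsto_log_atTop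
  have hU : Tendsto (fun ρ : ℝ => (M:ℝ) * (Real.log (t ρ)/Real.log ρ)
      - Real.log C * (Real.log ρ)⁻¹) atTop (nhds ((M:ℝ)*(2*r-1))) := by
    simpa using (hlogt.const_mul (M:ℝ)).sub (hinv.const_mul (Real.log C))
  have hL : Tendsto (fun ρ : ℝ => (M:ℝ) * (Real.log (t ρ)/Real.log ρ)
      - Real.log C * (Real.log ρ)⁻¹ - t ρ * (Real.log ρ)⁻¹) atTop
      (nhds ((M:ℝ)*(2*r-1))) := by
    simpa using hU.sub (ht0.mul hinv)
  have hmain : ∀ ρ : ℝ, 1 < ρ →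
      ((M:ℝ) * (Real.log (t ρ)/Real.log ρ) - Real.log C * (Real.log ρ)⁻¹ - t ρ * (Real.log ρ)⁻¹
        ≤ Real.log (ℙ {ω | Real.log (1 + ρ * X ω) < 2 * r * Real.log ρ}).toReal
          / Real.log ρ) ∧
      (Real.log (ℙ {ω | Real.log (1 + ρ * X ω) < 2 * r * Real.log ρ}).toReal / Real.log ρ
        ≤ (M:ℝ) * (Real.log (t ρ)/Real.log ρ) - Real.log C * (Real.log ρ)⁻¹) := by
    intro ρ hρ
    have hρ0 : (0:ℝ) < ρ := by linarith
    have hlρ : 0 < Real.log ρ := Real.log_pos hρ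
    have hA : 1 < ρ ^ (2*r) :=
      Real.one_lt_rpow_iff_of_pos hρ0 |>.mpr (Or.inl ⟨hρ, by linarith⟩)
    have htρ : 0 < t ρ := div_pos (by linarith) hρ0
    have hset : {ω | Real.log (1 + ρ * X ω) < 2 * r * Real.log ρ} = X ⁻¹' (Set.Iio (t ρ)) := by
      ext ω
      simp only [Set.mem_setOf_eq, Set.mem_preimage, Set.mem_Iio]
      have hx := hXpos ω
      have h1 : 0 < 1 + ρ * X ω := by nlinarith
      rw [show 2*r*Real.log ρ = Real.log (ρ ^ (2*r)) from (Real.log_rpow hρ0 _).symm]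
      rw [Real.log_lt_log_iff h1 (by linarith)]
      rw [htdef]
      rw [lt_div_iff₀ hρ0]
      constructor <;> intro h <;> nlinarith
    have hP : ℙ {ω | Real.log (1 + ρ * X ω) < 2 * r * Real.log ρ}
        = gammaMeasure (M : ℝ) 1 (Set.Iio (t ρ)) := by
      rw [hset, ← Measure.map_apply hXmeas measurableSet_Iio, hlaw]
    obtain ⟨hlb, hub⟩ := stmt2_gamma_bounds M hM htρ
    set P : ℝ := (gammaMeasure (M : ℝ) 1 (Set.Iio (t ρ))).toReal with hPdef
    have hlb0 : 0 < Real.exp (-(t ρ)) * ((t ρ) ^ M / C) := by positivity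
    have hP0 : 0 < P := lt_of_lt_of_le hlb0 hlb
    have hlogub : Real.log P ≤ (M:ℝ) * Real.log (t ρ) - Real.log C := by
      have h1 : Real.log P ≤ Real.log ((t ρ) ^ M / C) := Real.log_le_log hP0 hub
      have h2 : Real.log ((t ρ) ^ M / C) = (M:ℝ) * Real.log (t ρ) - Real.log C := by
        rw [Real.log_div (pow_ne_zero _ htρ.ne') hC0.ne', Real.log_pow]
      linarith
    have hloglb : -(t ρ) + ((M:ℝ) * Real.log (t ρ) - Real.log C) ≤ Real.log P := by
      have h1 : Real.log (Real.exp (-(t ρ)) * ((t ρ) ^ M / C)) ≤ Real.log P :=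
        Real.log_le_log hlb0 hlb
      have h2 : Real.log (Real.exp (-(t ρ)) * ((t ρ) ^ M / C))
          = -(t ρ) + ((M:ℝ) * Real.log (t ρ) - Real.log C) := by
        rw [Real.log_mul (Real.exp_ne_zero _) (by positivity), Real.log_exp,
          Real.log_div (pow_ne_zero _ htρ.ne') hC0.ne', Real.log_pow]
      linarith
    rw [hP, ← hPdef]
    constructor
    · have : (M:ℝ) * (Real.log (t ρ)/Real.log ρ) - Real.log C * (Real.log ρ)⁻¹
          - t ρ * (Real.log ρ)⁻¹
          = (-(t ρ) + ((M:ℝ) * Real.log (t ρ) - Real.log C)) / Real.log ρ := by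
        field_simp
        ring
      rw [this]
      gcongr
    · have : (M:ℝ) * (Real.log (t ρ)/Real.log ρ) - Real.log C * (Real.log ρ)⁻¹
          = ((M:ℝ) * Real.log (t ρ) - Real.log C) / Real.log ρ := by
        field_simp
      rw [this]
      gcongr
  rw [show -((M : ℝ) * (1 - 2 * r)) = (M:ℝ)*(2*r-1) by ring]
  apply tendsto_of_tendsto_of_tendsto_of_le_of_le' hL hU
  · filter_upwards [eventually_gt_atTop (1:ℝ)] with ρ hρ
    exact (hmain ρ hρ).1
  · filter_upwards [eventually_gt_atTop (1:ℝ)] with ρ hρ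
    exact (hmain ρ hρ).2
end

section
/- Let K ≥ 1 and M ≥ 1 be integers and let r > 0 satisfy r·max(1, 2K/M) + K r < 1. Then there exists a* ∈ (0, 1) such that d^MAC-sym_{2K,1,M}(r/a*) = d^PPC_{M,1}(K r/(1 − a*)) > 0, and moreover sup_{a ∈ (0,1)} min{ d^MAC-sym_{2K,1,M}(r/a), d^PPC_{M,1}(K r/(1 − a)) } equals this common value. (This is the balancing condition of Lemma 1 characterizing the optimal static time allocation of the DF-MAC-TDMA scheme, in which the first-phase exponent is d^MAC-sym_{2K,1,M}(r/a) and the second-phase exponent is d^PPC_{M,1}(Kr/(1−a)).) -/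
lemma dPPC_zero_of_le {m n : ℕ} {x : ℝ} (h : min (m:ℝ) (n:ℝ) ≤ x) : dPPC m n x = 0 :=
  if_pos h

lemma dPPC_small {m n : ℕ} {x : ℝ} (h0 : 0 ≤ x) (h1 : x < 1) (hm : x < (m:ℝ)) (hn : x < (n:ℝ)) :
    dPPC m n x = (m:ℝ)*(n:ℝ) - x * ((m:ℝ)+(n:ℝ)-1) := by
  have hfl : ⌊x⌋ = 0 := Int.floor_eq_zero_iff.2 ⟨h0, h1⟩
  rw [dPPC, if_neg (by push_neg; exact lt_min hm hn), hfl]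
  push_cast
  ring

lemma dPPC_top {m n : ℕ} {x : ℝ} (hn : 1 ≤ n) (hnm : n ≤ m) (h0 : (n:ℝ) - 1 ≤ x) (h1 : x < (n:ℝ)) :
    dPPC m n x = ((m:ℝ) - (n:ℝ) + 1) * ((n:ℝ) - x) := by
  have hmin : min (m:ℝ) (n:ℝ) = (n:ℝ) := min_eq_right (by exact_mod_cast hnm)
  have hfl : ⌊x⌋ = (n:ℤ) - 1 := by
    rw [Int.floor_eq_iff]
    constructor
    · push_cast; linarith
    · push_cast; linarith
  rw [dPPC, if_neg (by rw [hmin]; linarith), hfl]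
  push_cast
  ring

lemma dPPC_pos {m n : ℕ} {x : ℝ} (h0 : 0 ≤ x) (h1 : x < min (m:ℝ) (n:ℝ)) : 0 < dPPC m n x := by
  have hxm : x < (m:ℝ) := lt_of_lt_of_le h1 (min_le_left _ _)
  have hxn : x < (n:ℝ) := lt_of_lt_of_le h1 (min_le_right _ _)
  set k := ⌊x⌋ with hk
  have hk0 : (0:ℝ) ≤ (k:ℝ) := by exact_mod_cast Int.floor_nonneg.2 h0
  have hkx : (k:ℝ) ≤ x := Int.floor_le x
  have hxk : x < (k:ℝ) + 1 := Int.lt_floor_add_one x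
  have hkm : (k:ℝ) + 1 ≤ (m:ℝ) := by
    have : k < (m:ℤ) := by exact_mod_cast lt_of_le_of_lt hkx hxm
    exact_mod_cast this
  have hkn : (k:ℝ) + 1 ≤ (n:ℝ) := by
    have : k < (n:ℤ) := by exact_mod_cast lt_of_le_of_lt hkx hxn
    exact_mod_cast this
  rw [dPPC, if_neg (not_le.2 h1)]
  nlinarith [mul_nonneg (by linarith : (0:ℝ) ≤ (m:ℝ) - ((k:ℝ)+1)) (by linarith : (0:ℝ) ≤ (n:ℝ) - ((k:ℝ)+1)),
    mul_pos (by linarith : (0:ℝ) < (k:ℝ)+1-x) (by linarith : (0:ℝ) < (m:ℝ)+(n:ℝ)-2*(k:ℝ)-1)]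

lemma dPPC_nonneg {m n : ℕ} {x : ℝ} (h0 : 0 ≤ x) : 0 ≤ dPPC m n x := by
  rcases le_or_gt (min (m:ℝ) (n:ℝ)) x with h | h
  · rw [dPPC_zero_of_le h]
  · exact (dPPC_pos h0 h).le

lemma dPPC_anti {m n : ℕ} {x y : ℝ} (h0 : 0 ≤ x) (hxy : x ≤ y) : dPPC m n y ≤ dPPC m n x := by
  rcases le_or_gt (min (m:ℝ) (n:ℝ)) y with h | h
  · rw [dPPC_zero_of_le h]; exact dPPC_nonneg h0
  · have hx : x < min (m:ℝ) (n:ℝ) := lt_of_le_of_lt hxy h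
    have hym : y < (m:ℝ) := lt_of_lt_of_le h (min_le_left _ _)
    have hyn : y < (n:ℝ) := lt_of_lt_of_le h (min_le_right _ _)
    set k := ⌊x⌋ with hk
    set l := ⌊y⌋ with hl
    have hkl : k ≤ l := Int.floor_le_floor hxy
    have hkx : (k:ℝ) ≤ x := Int.floor_le x
    have hxk : x < (k:ℝ) + 1 := Int.lt_floor_add_one x
    have hly : (l:ℝ) ≤ y := Int.floor_le y
    have hyl : y < (l:ℝ) + 1 := Int.lt_floor_add_one y
    have hlm : (l:ℝ) + 1 ≤ (m:ℝ) := by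
      have : l < (m:ℤ) := by exact_mod_cast lt_of_le_of_lt hly hym
      exact_mod_cast this
    have hln : (l:ℝ) + 1 ≤ (n:ℝ) := by
      have : l < (n:ℤ) := by exact_mod_cast lt_of_le_of_lt hly hyn
      exact_mod_cast this
    rw [dPPC, if_neg (not_le.2 h), dPPC, if_neg (not_le.2 hx)]
    have h1 : ((m:ℝ) - (l:ℝ)) * ((n:ℝ) - (l:ℝ)) - (y - (l:ℝ)) * ((m:ℝ)+(n:ℝ)-2*(l:ℝ)-1)
        ≤ ((m:ℝ) - (l:ℝ)) * ((n:ℝ) - (l:ℝ)) - (x - (l:ℝ)) * ((m:ℝ)+(n:ℝ)-2*(l:ℝ)-1) := by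
      nlinarith [mul_nonneg (by linarith : (0:ℝ) ≤ y - x) (by linarith : (0:ℝ) ≤ (m:ℝ)+(n:ℝ)-2*(l:ℝ)-1)]
    refine le_trans h1 ?_
    rcases eq_or_lt_of_le hkl with heq | hlt
    · rw [← hk, heq]
    · have hkl1 : (k:ℝ) + 1 ≤ (l:ℝ) := by exact_mod_cast hlt
      nlinarith [mul_nonneg (by linarith : (0:ℝ) ≤ (l:ℝ) - (k:ℝ)) (by linarith : (0:ℝ) ≤ (k:ℝ)+(l:ℝ)+1-2*x)]

lemma dMACsym_eq (K M : ℕ) (x : ℝ) :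
    dMACsym (2*K) 1 M x =
      if x ≤ min 1 ((M:ℝ)/(2*(K:ℝ)+1)) then dPPC 1 M x
      else dPPC (2*K) M (2*(K:ℝ)*x) := by
  simp only [dMACsym, Nat.cast_one, Nat.cast_mul, Nat.cast_ofNat, mul_one]

section KM
variable {K M : ℕ} (hK : 1 ≤ K) (hM : 1 ≤ M)

lemma junction (hK : 1 ≤ K) (hM : 1 ≤ M) :
    dPPC 1 M (min 1 ((M:ℝ)/(2*(K:ℝ)+1)))
      = dPPC (2*K) M (2*(K:ℝ) * min 1 ((M:ℝ)/(2*(K:ℝ)+1))) := by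
  have hK1 : (1:ℝ) ≤ (K:ℝ) := by exact_mod_cast hK
  have hM1 : (1:ℝ) ≤ (M:ℝ) := by exact_mod_cast hM
  have h2K : ((2*K:ℕ):ℝ) = 2*(K:ℝ) := by push_cast; ring
  rcases le_or_gt (M:ℕ) (2*K) with hle | hlt
  · -- M ≤ 2K : x0 = M/(2K+1) < 1
    have hle' : (M:ℝ) ≤ 2*(K:ℝ) := by exact_mod_cast hle
    have hden : (0:ℝ) < 2*(K:ℝ)+1 := by linarith
    have hx0lt : (M:ℝ)/(2*(K:ℝ)+1) < 1 := by rw [div_lt_one hden]; linarith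
    have hmin : min 1 ((M:ℝ)/(2*(K:ℝ)+1)) = (M:ℝ)/(2*(K:ℝ)+1) :=
      min_eq_right hx0lt.le
    rw [hmin]
    have hx0pos : (0:ℝ) < (M:ℝ)/(2*(K:ℝ)+1) := by positivity
    have hy : 2*(K:ℝ)*((M:ℝ)/(2*(K:ℝ)+1)) = (M:ℝ) - (M:ℝ)/(2*(K:ℝ)+1) := by
      field_simp; ring
    rw [dPPC_small hx0pos.le hx0lt (by push_cast; linarith) (by linarith)]
    rw [dPPC_top hM (by omega) (by rw [hy]; linarith) (by rw [hy]; linarith)]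
    rw [h2K, hy]
    push_cast
    field_simp
    ring
  · -- 2K < M : x0 = 1
    have hlt' : 2*(K:ℝ) + 1 ≤ (M:ℝ) := by exact_mod_cast (by omega : 2*K+1 ≤ M)
    have hmin : min 1 ((M:ℝ)/(2*(K:ℝ)+1)) = 1 := by
      apply min_eq_left
      rw [le_div_iff₀ (by linarith)]
      linarith
    rw [hmin]
    rw [dPPC_zero_of_le (by push_cast; exact min_le_left _ _),
        dPPC_zero_of_le (by rw [h2K, mul_one]; exact le_trans (min_le_left _ _) le_rfl)]

lemma G_anti (hK : 1 ≤ K) (hM : 1 ≤ M) {x y : ℝ} (h0 : 0 ≤ x) (hxy : x ≤ y) :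
    dMACsym (2*K) 1 M y ≤ dMACsym (2*K) 1 M x := by
  have hK1 : (1:ℝ) ≤ (K:ℝ) := by exact_mod_cast hK
  rw [dMACsym_eq, dMACsym_eq]
  by_cases hx : x ≤ min 1 ((M:ℝ)/(2*(K:ℝ)+1))
  · by_cases hy : y ≤ min 1 ((M:ℝ)/(2*(K:ℝ)+1))
    · rw [if_pos hx, if_pos hy]; exact dPPC_anti h0 hxy
    · rw [if_pos hx, if_neg hy]
      push_neg at hy
      have h1 : dPPC (2*K) M (2*(K:ℝ)*y) ≤ dPPC (2*K) M (2*(K:ℝ)*(min 1 ((M:ℝ)/(2*(K:ℝ)+1)))) := by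
        apply dPPC_anti
        · positivity
        · nlinarith [hy.le]
      have h2 : dPPC 1 M (min 1 ((M:ℝ)/(2*(K:ℝ)+1))) ≤ dPPC 1 M x := dPPC_anti h0 (le_trans hx le_rfl)
      calc dPPC (2*K) M (2*(K:ℝ)*y) ≤ _ := h1
        _ = dPPC 1 M (min 1 ((M:ℝ)/(2*(K:ℝ)+1))) := (junction hK hM).symm
        _ ≤ dPPC 1 M x := h2
  · have hy : ¬ y ≤ min 1 ((M:ℝ)/(2*(K:ℝ)+1)) := fun h => hx (le_trans hxy h)
    rw [if_neg hx, if_neg hy]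
    exact dPPC_anti (by positivity) (by nlinarith)

lemma GI (hM : 1 ≤ M) {x : ℝ} (h0 : 0 ≤ x) (hx : x ≤ min 1 ((M:ℝ)/(2*(K:ℝ)+1))) (h1 : x < 1) :
    dMACsym (2*K) 1 M x = (M:ℝ) * (1 - x) := by
  have hM1 : (1:ℝ) ≤ (M:ℝ) := by exact_mod_cast hM
  rw [dMACsym_eq, if_pos hx, dPPC_small h0 h1 (by push_cast; linarith) (by linarith)]
  push_cast; ring

lemma GII (hK : 1 ≤ K) (hM : 1 ≤ M) (hle : M ≤ 2*K) {x : ℝ}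
    (hx0 : min 1 ((M:ℝ)/(2*(K:ℝ)+1)) ≤ x) (hx1 : x ≤ (M:ℝ)/(2*(K:ℝ))) :
    dMACsym (2*K) 1 M x = (2*(K:ℝ) - (M:ℝ) + 1) * ((M:ℝ) - 2*(K:ℝ)*x) := by
  have hK1 : (1:ℝ) ≤ (K:ℝ) := by exact_mod_cast hK
  have hM1 : (1:ℝ) ≤ (M:ℝ) := by exact_mod_cast hM
  have hle' : (M:ℝ) ≤ 2*(K:ℝ) := by exact_mod_cast hle
  have hden : (0:ℝ) < 2*(K:ℝ)+1 := by linarith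
  have hx0lt : (M:ℝ)/(2*(K:ℝ)+1) < 1 := by rw [div_lt_one hden]; linarith
  have hmin : min 1 ((M:ℝ)/(2*(K:ℝ)+1)) = (M:ℝ)/(2*(K:ℝ)+1) := min_eq_right hx0lt.le
  have h2K : ((2*K:ℕ):ℝ) = 2*(K:ℝ) := by push_cast; ring
  have hyM : 2*(K:ℝ)*x ≤ (M:ℝ) := by
    rw [le_div_iff₀ (by linarith)] at hx1; linarith
  have hylb : (M:ℝ) - 1 < 2*(K:ℝ)*x := by
    have hx0' : (M:ℝ) ≤ x*(2*(K:ℝ)+1) := by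
      rw [hmin, div_le_iff₀ hden] at hx0; linarith
    by_contra hcon
    push_neg at hcon
    have hxge : (1:ℝ) ≤ x := by nlinarith
    nlinarith
  rw [dMACsym_eq]
  by_cases hx : x ≤ min 1 ((M:ℝ)/(2*(K:ℝ)+1))
  · -- x = x0 exactly
    have hxeq : x = (M:ℝ)/(2*(K:ℝ)+1) := le_antisymm (hmin ▸ hx) (hmin ▸ hx0)
    rw [if_pos hx, dPPC_small (by rw [hxeq]; positivity) (by rw [hxeq]; exact hx0lt)
      (by push_cast; rw [hxeq]; linarith) (by rw [hxeq]; linarith)]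
    rw [hxeq]
    push_cast
    field_simp
    ring
  · rw [if_neg hx]
    rcases lt_or_eq_of_le hyM with hlt | heq
    · rw [dPPC_top hM hle hylb.le hlt, h2K]
    · have h0' : dPPC (2*K) M (2*(K:ℝ)*x) = 0 :=
        dPPC_zero_of_le (by rw [h2K, heq]; exact min_le_right _ _)
      rw [h0', heq]
      ring

lemma gval (hM : 1 ≤ M) {t : ℝ} (h0 : 0 ≤ t) (h1 : t < 1) :
    dPPC M 1 t = (M:ℝ)*(1-t) := by
  have hM1 : (1:ℝ) ≤ (M:ℝ) := by exact_mod_cast hM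
  rw [dPPC_small h0 h1 (by linarith) (by exact_mod_cast h1)]
  push_cast; ring

set_option maxHeartbeats 1600000 in
lemma core (hK : 1 ≤ K) (hM : 1 ≤ M) (r : ℝ) (hr : 0 < r)
    (hcond : r * max 1 ((2 * (K : ℝ)) / (M : ℝ)) + (K : ℝ) * r < 1) :
    ∃ a ∈ Set.Ioo (0 : ℝ) 1,
      dMACsym (2 * K) 1 M (r / a) = dPPC M 1 ((K : ℝ) * r / (1 - a)) ∧
      0 < dPPC M 1 ((K : ℝ) * r / (1 - a)) := by
  have hK1 : (1:ℝ) ≤ (K:ℝ) := by exact_mod_cast hK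
  have hM1 : (1:ℝ) ≤ (M:ℝ) := by exact_mod_cast hM
  have hM0 : (0:ℝ) < (M:ℝ) := by linarith
  have hrs : (K:ℝ)*r + r < 1 := by
    have h1 : r * 1 ≤ r * max 1 ((2 * (K : ℝ)) / (M : ℝ)) :=
      mul_le_mul_of_nonneg_left (le_max_left _ _) hr.le
    linarith
  by_cases hcase : (K:ℝ)*r + r ≤ min 1 ((M:ℝ)/(2*(K:ℝ)+1))
  · -- balanced in the first (single-user) piece
    refine ⟨1/((K:ℝ)+1), ⟨by positivity, by rw [div_lt_one (by linarith)]; linarith⟩, ?_⟩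
    have harg1 : r / (1/((K:ℝ)+1)) = (K:ℝ)*r + r := by
      field_simp
    have harg2 : (K:ℝ)*r/(1 - 1/((K:ℝ)+1)) = (K:ℝ)*r + r := by
      rw [show 1 - 1/((K:ℝ)+1) = (K:ℝ)/((K:ℝ)+1) by field_simp; ring]
      field_simp
    rw [harg1, harg2, GI hM (by positivity) hcase (by linarith),
      gval hM (by positivity) (by linarith)]
    exact ⟨rfl, by nlinarith⟩
  · -- balanced in the second (MAC) piece; here M ≤ 2K
    have hle : M ≤ 2*K := by
      by_contra hcon
      push_neg at hcon
      have hlt' : 2*(K:ℝ) + 1 ≤ (M:ℝ) := by exact_mod_cast (by omega : 2*K+1 ≤ M)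
      have hmin : min 1 ((M:ℝ)/(2*(K:ℝ)+1)) = 1 := by
        apply min_eq_left
        rw [le_div_iff₀ (by linarith)]
        linarith
      exact hcase (by rw [hmin]; linarith)
    have hle' : (M:ℝ) ≤ 2*(K:ℝ) := by exact_mod_cast hle
    have hden : (0:ℝ) < 2*(K:ℝ)+1 := by linarith
    have hx0lt : (M:ℝ)/(2*(K:ℝ)+1) < 1 := by rw [div_lt_one hden]; linarith
    have hmin : min 1 ((M:ℝ)/(2*(K:ℝ)+1)) = (M:ℝ)/(2*(K:ℝ)+1) := min_eq_right hx0lt.le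
    have hKr : (M:ℝ)/(2*(K:ℝ)+1) < (K:ℝ)*r + r := by
      push_neg at hcase; rwa [hmin] at hcase
    have hmax : max 1 ((2 * (K : ℝ)) / (M : ℝ)) = (2 * (K : ℝ)) / (M : ℝ) :=
      max_eq_right (by rw [le_div_iff₀ hM0]; linarith)
    obtain ⟨p, hpdef⟩ : ∃ p : ℝ, p = 2*(K:ℝ)*r/(M:ℝ) := ⟨_, rfl⟩
    obtain ⟨q, hqdef⟩ : ∃ q : ℝ, q = (2*(K:ℝ)+1)*r/(M:ℝ) := ⟨_, rfl⟩
    have hp0 : 0 < p := by rw [hpdef]; positivity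
    have hq0 : 0 < q := by rw [hqdef]; positivity
    have hpq : p ≤ q := by
      rw [hpdef, hqdef]
      gcongr
      linarith
    have hcond' : p + (K:ℝ)*r < 1 := by
      rw [hmax] at hcond
      have : r * (2 * (K:ℝ) / (M:ℝ)) = p := by rw [hpdef]; ring
      linarith [this ▸ hcond]
    have hq1 : q < 1 := by
      have h1 : r/(M:ℝ) ≤ r := div_le_self hr.le hM1
      have h2 : q = p + r/(M:ℝ) := by rw [hpdef, hqdef]; ring
      nlinarith
    have hcont : ContinuousOn (fun a : ℝ => (2*(K:ℝ) - (M:ℝ) + 1)*((M:ℝ) - 2*(K:ℝ)*r/a)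
        - (M:ℝ)*(1 - (K:ℝ)*r/(1-a))) (Set.Icc p q) := by
      apply ContinuousOn.sub
      · exact continuousOn_const.mul (continuousOn_const.sub
          (continuousOn_const.div continuousOn_id
            (fun a ha => ne_of_gt (lt_of_lt_of_le hp0 ha.1))))
      · exact continuousOn_const.mul (continuousOn_const.sub
          (continuousOn_const.div (continuousOn_const.sub continuousOn_id)
            (fun a ha => by
              have : a ≤ q := ha.2
              first
                | (simp only [id_eq]; intro hc; nlinarith)
                | (intro hc; nlinarith))))
    have h2Krp : 2*(K:ℝ)*r/p = (M:ℝ) := by rw [hpdef]; field_simp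
    have hFp : (2*(K:ℝ) - (M:ℝ) + 1)*((M:ℝ) - 2*(K:ℝ)*r/p)
        - (M:ℝ)*(1 - (K:ℝ)*r/(1-p)) < 0 := by
      rw [h2Krp]
      have ht : (K:ℝ)*r/(1-p) < 1 := by
        rw [div_lt_one (by linarith)]; linarith
      nlinarith
    have hFq : 0 ≤ (2*(K:ℝ) - (M:ℝ) + 1)*((M:ℝ) - 2*(K:ℝ)*r/q)
        - (M:ℝ)*(1 - (K:ℝ)*r/(1-q)) := by
      have h1 : (M:ℝ) - 2*(K:ℝ)*r/q = (M:ℝ)/(2*(K:ℝ)+1) := by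
        rw [hqdef]; field_simp; ring
      rw [h1]
      have hq' : (0:ℝ) < 1 - q := by linarith
      have hx0q : (M:ℝ)/(2*(K:ℝ)+1) * q = r := by rw [hqdef]; field_simp
      have h2 : (M:ℝ)/(2*(K:ℝ)+1) ≤ (K:ℝ)*r/(1-q) := by
        rw [le_div_iff₀ hq', mul_one_sub, hx0q]
        linarith
      have h3 : (2*(K:ℝ)-(M:ℝ)+1)*((M:ℝ)/(2*(K:ℝ)+1))
          = (M:ℝ)*(1 - (M:ℝ)/(2*(K:ℝ)+1)) := by field_simp; ring
      have h4 : (M:ℝ)*(1 - (K:ℝ)*r/(1-q)) ≤ (M:ℝ)*(1 - (M:ℝ)/(2*(K:ℝ)+1)) :=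
        mul_le_mul_of_nonneg_left (by linarith) hM0.le
      rw [h3]
      linarith
    obtain ⟨a, haIcc, haF⟩ := intermediate_value_Icc hpq hcont ⟨hFp.le, hFq⟩
    replace haF : (2*(K:ℝ) - (M:ℝ) + 1)*((M:ℝ) - 2*(K:ℝ)*r/a)
        - (M:ℝ)*(1 - (K:ℝ)*r/(1-a)) = 0 := haF
    have hap : p < a := by
      rcases eq_or_lt_of_le haIcc.1 with h | h
      · exfalso; rw [← h] at haF; linarith
      · exact h
    have haq : a ≤ q := haIcc.2
    have ha1 : a < 1 := lt_of_le_of_lt haq hq1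
    have ha0 : 0 < a := lt_trans hp0 hap
    have hMlt : 2*(K:ℝ)*r/a < (M:ℝ) := by
      rw [← h2Krp]
      exact div_lt_div_of_pos_left (by positivity) hp0 hap
    have hFpos : 0 < (2*(K:ℝ) - (M:ℝ) + 1)*((M:ℝ) - 2*(K:ℝ)*r/a) :=
      mul_pos (by linarith) (by linarith)
    have hgF : (M:ℝ)*(1 - (K:ℝ)*r/(1-a)) = (2*(K:ℝ) - (M:ℝ) + 1)*((M:ℝ) - 2*(K:ℝ)*r/a) := by
      linarith
    have htlt : (K:ℝ)*r/(1-a) < 1 := by nlinarith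
    have ht0 : 0 ≤ (K:ℝ)*r/(1-a) := div_nonneg (by positivity) (by linarith)
    have hxlo : min 1 ((M:ℝ)/(2*(K:ℝ)+1)) ≤ r/a := by
      rw [hmin]
      have hrq : r/q = (M:ℝ)/(2*(K:ℝ)+1) := by rw [hqdef]; field_simp
      rw [← hrq]
      exact div_le_div_of_nonneg_left hr.le ha0 haq
    have hxhi : r/a ≤ (M:ℝ)/(2*(K:ℝ)) := by
      have hrp : r/p = (M:ℝ)/(2*(K:ℝ)) := by rw [hpdef]; field_simp
      rw [← hrp]
      exact div_le_div_of_nonneg_left hr.le hp0 hap.le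
    refine ⟨a, ⟨ha0, ha1⟩, ?_, ?_⟩
    · rw [GII hK hM hle hxlo hxhi, gval hM ht0 htlt,
        show 2*(K:ℝ)*(r/a) = 2*(K:ℝ)*r/a by ring]
      linarith [hgF]
    · rw [gval hM ht0 htlt]
      nlinarith

end KM


/-- Lemma 1, balancing condition for static DF-MAC-TDMA: if `K, M ≥ 1`
and `r > 0` satisfies `r·max(1, 2K/M) + Kr < 1`, then there is a time allocation
`a* ∈ (0,1)` making the two phase exponents equal and positive,
`d^MAC-sym_{2K,1,M}(r/a*) = d^PPC_{M,1}(Kr/(1-a*)) > 0`, and the sup over `a ∈ (0,1)`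
of the min of the two phase exponents equals this common value. -/
theorem stmt4 (K M : ℕ) (hK : 1 ≤ K) (hM : 1 ≤ M) (r : ℝ) (hr : 0 < r)
    (hcond : r * max 1 ((2 * (K : ℝ)) / (M : ℝ)) + (K : ℝ) * r < 1) :
    ∃ a ∈ Set.Ioo (0 : ℝ) 1,
      dMACsym (2 * K) 1 M (r / a) = dPPC M 1 ((K : ℝ) * r / (1 - a)) ∧
      0 < dPPC M 1 ((K : ℝ) * r / (1 - a)) ∧
      sSup ((fun b : ℝ =>
          min (dMACsym (2 * K) 1 M (r / b)) (dPPC M 1 ((K : ℝ) * r / (1 - b)))) ''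
          Set.Ioo 0 1)
        = dPPC M 1 ((K : ℝ) * r / (1 - a)) := by
  obtain ⟨a, haI, heq, hpos⟩ := core hK hM r hr hcond
  refine ⟨a, haI, heq, hpos, ?_⟩
  apply IsGreatest.csSup_eq
  constructor
  · exact ⟨a, haI, by simp only; rw [heq, min_self]⟩
  · rintro v ⟨b, hbI, rfl⟩
    rcases le_total b a with hba | hab
    · refine le_trans (min_le_left _ _) ?_
      rw [← heq]
      exact G_anti hK hM (le_of_lt (div_pos hr haI.1))
        (div_le_div_of_nonneg_left hr.le hbI.1 hba)
    · refine le_trans (min_le_right _ _) ?_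
      apply dPPC_anti (div_nonneg (by positivity) (by linarith [haI.2]))
      apply div_le_div_of_nonneg_left (by positivity) (by linarith [hbI.2]) (by linarith)
end

section
/- Let M ≥ 1 and K ≥ 1 be integers. Define, for α₁, α₂ ≥ 0, S₁ = (1 − α₁)^+ and S₂ = (1 − α₂)^+. For every real r: (i) if 0 < r < 1/(K+1), then inf{ M(α₁ + α₂) : α₁ ≥ 0, α₂ ≥ 0, S₁ S₂ < r (K S₁ + S₂) } = M (1 − (K+1) r) / (1 − r); (ii) if r > 1/(K+1), then this infimum equals 0. (This is the optimization d_out(r) solved in the converse of Theorem 2, yielding the upper bound d(r) ≤ M((1 − (K+1)r)/(1 − r))^+.) -/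
private lemma core_aux (kk r a b : ℝ) (hkk : 1 ≤ kk) (hr : 0 < r) (hr2 : r * (kk + 1) < 1)
    (ha : 0 ≤ a) (hb : 0 ≤ b) (ha1 : a < 1) (hb1 : b < 1)
    (hcon : (1 - a) * (1 - b) < r * (kk * (1 - a) + (1 - b))) :
    1 - (kk + 1) * r ≤ (a + b) * (1 - r) := by
  by_contra h
  push_neg at h
  have hT : 0 < 1 - (kk + 1) * r - (a + b) * (1 - r) := by linarith
  have hr1 : r < 1 := by nlinarith
  have hrk : kk * r < 1 := by nlinarith
  have h1 : 0 ≤ (kk - 1) * (1 - (kk + 1) * r) := by nlinarith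
  have hU : 0 ≤ (1 - a - b) * (1 - kk * r) - r := by
    nlinarith [mul_pos hr (sub_pos.mpr hrk), mul_nonneg hT.le (sub_pos.mpr hrk).le,
      mul_nonneg (mul_nonneg hr.le h1) (sub_pos.mpr hr1).le]
  nlinarith [mul_nonneg (mul_nonneg ha hb) (add_nonneg ha hb),
    mul_nonneg hb hT.le, mul_nonneg ha hU,
    mul_nonneg (add_nonneg ha hb) (sub_nonneg.mpr hcon.le)]

/-- the optimization `d_out(r)` in the converse of Theorem 2: with
`S₁ = (1-α₁)⁺`, `S₂ = (1-α₂)⁺`, the infimum of `M(α₁ + α₂)` over `α₁, α₂ ≥ 0`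
subject to the outage constraint `S₁S₂ < r(K S₁ + S₂)` equals
`M(1-(K+1)r)/(1-r)` for `0 < r < 1/(K+1)`, and equals `0` for `r > 1/(K+1)`. -/
theorem stmt6 (M K : ℕ) (hM : 1 ≤ M) (hK : 1 ≤ K) (r : ℝ) :
    (0 < r → r < 1 / ((K : ℝ) + 1) →
      sInf {d : ℝ | ∃ α₁ α₂ : ℝ, 0 ≤ α₁ ∧ 0 ≤ α₂ ∧
          max (1 - α₁) 0 * max (1 - α₂) 0
            < r * ((K : ℝ) * max (1 - α₁) 0 + max (1 - α₂) 0) ∧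
          d = (M : ℝ) * (α₁ + α₂)}
        = (M : ℝ) * (1 - ((K : ℝ) + 1) * r) / (1 - r)) ∧
    (1 / ((K : ℝ) + 1) < r →
      sInf {d : ℝ | ∃ α₁ α₂ : ℝ, 0 ≤ α₁ ∧ 0 ≤ α₂ ∧
          max (1 - α₁) 0 * max (1 - α₂) 0
            < r * ((K : ℝ) * max (1 - α₁) 0 + max (1 - α₂) 0) ∧
          d = (M : ℝ) * (α₁ + α₂)}
        = 0) := by
  set kk : ℝ := (K : ℝ) with hkkdef
  have hkk : 1 ≤ kk := by rw [hkkdef]; exact_mod_cast hK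
  have hM1 : (1 : ℝ) ≤ (M : ℝ) := by exact_mod_cast hM
  have hM0 : (0 : ℝ) < (M : ℝ) := by linarith
  have hkk1 : 0 < kk + 1 := by linarith
  constructor
  · intro hr hrlt
    have hr2 : r * (kk + 1) < 1 := by
      calc r * (kk + 1) < (1 / (kk + 1)) * (kk + 1) := by
            apply mul_lt_mul_of_pos_right hrlt hkk1
        _ = 1 := by field_simp
    have hr1 : r < 1 := by nlinarith
    have hr1' : 0 < 1 - r := by linarith
    -- the target value
    set c : ℝ := (1 - (kk + 1) * r) / (1 - r) with hc
    have hc0 : 0 < c := by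
      apply div_pos (by nlinarith) hr1'
    have hc1 : c < 1 := by
      rw [hc, div_lt_one hr1']
      nlinarith
    have hbdd : BddBelow {d : ℝ | ∃ α₁ α₂ : ℝ, 0 ≤ α₁ ∧ 0 ≤ α₂ ∧
        max (1 - α₁) 0 * max (1 - α₂) 0
          < r * (kk * max (1 - α₁) 0 + max (1 - α₂) 0) ∧
        d = (M : ℝ) * (α₁ + α₂)} := by
      refine ⟨0, ?_⟩
      rintro d ⟨a, b, ha, hb, _, rfl⟩
      positivity
    have hne : {d : ℝ | ∃ α₁ α₂ : ℝ, 0 ≤ α₁ ∧ 0 ≤ α₂ ∧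
        max (1 - α₁) 0 * max (1 - α₂) 0
          < r * (kk * max (1 - α₁) 0 + max (1 - α₂) 0) ∧
        d = (M : ℝ) * (α₁ + α₂)}.Nonempty := by
      refine ⟨(M : ℝ) * (1 + 0), 1, 0, by norm_num, le_refl 0, ?_, rfl⟩
      simp only [sub_self, max_self, sub_zero]
      norm_num
      linarith
    apply le_antisymm
    · -- upper bound: sInf ≤ M * c
      rw [show (M : ℝ) * (1 - (kk + 1) * r) / (1 - r) = (M : ℝ) * c by rw [hc]; ring]
      apply le_of_forall_pos_le_add
      intro ε hε
      set δ : ℝ := min (ε / M) ((1 - c) / 2) with hδ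
      have hδ0 : 0 < δ := lt_min (div_pos hε hM0) (by linarith)
      have hb1 : c + δ < 1 := by
        have : δ ≤ (1 - c) / 2 := min_le_right _ _
        linarith
      have hmem : (M : ℝ) * (0 + (c + δ)) ∈ {d : ℝ | ∃ α₁ α₂ : ℝ, 0 ≤ α₁ ∧ 0 ≤ α₂ ∧
          max (1 - α₁) 0 * max (1 - α₂) 0
            < r * (kk * max (1 - α₁) 0 + max (1 - α₂) 0) ∧
          d = (M : ℝ) * (α₁ + α₂)} := by
        refine ⟨0, c + δ, le_refl 0, by linarith, ?_, rfl⟩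
        rw [sub_zero, max_eq_left (by norm_num : (0:ℝ) ≤ 1),
          max_eq_left (by linarith : (0:ℝ) ≤ 1 - (c + δ))]
        -- need: 1 * (1 - (c+δ)) < r * (kk * 1 + (1 - (c+δ)))
        have hcval : c * (1 - r) = 1 - (kk + 1) * r := by
          rw [hc]; field_simp
        nlinarith
      calc sInf _ ≤ (M : ℝ) * (0 + (c + δ)) := csInf_le hbdd hmem
        _ = (M : ℝ) * c + (M : ℝ) * δ := by ring
        _ ≤ (M : ℝ) * c + ε := by
            have : δ ≤ ε / M := min_le_left _ _
            have : (M : ℝ) * δ ≤ (M : ℝ) * (ε / M) := by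
              apply mul_le_mul_of_nonneg_left this hM0.le
            rw [mul_div_cancel₀ ε (ne_of_gt hM0)] at this
            linarith
    · -- lower bound
      apply le_csInf hne
      rintro d ⟨a, b, ha, hb, hcon, rfl⟩
      rw [div_le_iff₀ hr1']
      have key : 1 - (kk + 1) * r ≤ (a + b) * (1 - r) := by
        rcases le_or_gt 1 a with h1a | h1a
        · nlinarith
        rcases le_or_gt 1 b with h1b | h1b
        · nlinarith
        · have e1 : max (1 - a) 0 = 1 - a := max_eq_left (by linarith)
          have e2 : max (1 - b) 0 = 1 - b := max_eq_left (by linarith)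
          rw [e1, e2] at hcon
          exact core_aux kk r a b hkk hr hr2 ha hb h1a h1b hcon
      nlinarith
  · intro hrgt
    have hr2 : 1 < r * (kk + 1) := by
      rw [div_lt_iff₀ hkk1] at hrgt
      linarith
    apply le_antisymm
    · apply csInf_le
      · refine ⟨0, ?_⟩
        rintro d ⟨a, b, ha, hb, _, rfl⟩
        positivity
      · refine ⟨0, 0, le_refl 0, le_refl 0, ?_, by ring⟩
        simp only [sub_zero, max_eq_left (by norm_num : (0:ℝ) ≤ 1)]
        nlinarith
    · apply le_csInf
      · refine ⟨0, 0, 0, le_refl 0, le_refl 0, ?_, by ring⟩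
        simp only [sub_zero, max_eq_left (by norm_num : (0:ℝ) ≤ 1)]
        nlinarith
      · rintro d ⟨a, b, ha, hb, _, rfl⟩
        positivity
end

section
/- Fix integers K ≥ 1 and M ≥ 2K and a real r with 0 < r < 1/(K+1). For each integer L with 1 ≤ L ≤ 2K define d^L(r) as the infimum of Σ_{j=1}^{L} (2j − 1 + M − L) α_{1,j} + M α_{2} over all (α_{1,1}, …, α_{1,L}, α₂) satisfying α_{1,1} ≥ α_{1,2} ≥ … ≥ α_{1,L} ≥ 0, α₂ ≥ 0, and S₁ S₂ < r (K S₁ + L S₂), where S₁ = Σ_{j=1}^{L} (1 − α_{1,j})^+ and S₂ = (1 − α₂)^+. Then d_DDF(r) := min_{1 ≤ L ≤ 2K} d^L(r) = M (1 − (K+1) r) / (1 − r). (This is the matching of the dynamic decode-and-forward lower bound with the converse upper bound in Theorem 2 when the relay has at least 2K antennas; the index L plays the role of the cardinality |Λ| of the set of users decoded last, and since M ≥ 2K ≥ L the weights 2j − 1 + |M_i − M_{i+1}| of equation (6) specialize to 2j − 1 + (M − L) for the first hop and M for the second hop.) -/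
set_option maxHeartbeats 1600000 in
/-- Key two-variable inequality (the converse bound for each `L`). -/
lemma aux_C3 (k l m r a b : ℝ) (hk : 1 ≤ k) (hl : 1 ≤ l) (hlm : l ≤ m)
    (hr0 : 0 < r) (hr1 : r * (k + 1) < 1)
    (ha0 : 0 ≤ a) (hal : a ≤ l) (hb0 : 0 ≤ b) (hb1 : b ≤ 1)
    (hab : a * b ≤ r * (k * a + l * b)) :
    m * (1 - r) * b ≤ (1 - r) * (m - l + 1) * (l - a) + m * k * r := by
  have hrk : 0 < 1 - r * k := by nlinarith
  have hr1' : 0 < 1 - r := by nlinarith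
  have hm0 : (0:ℝ) < m := by linarith
  have hML : 0 ≤ (l - 1) * (m - l) := mul_nonneg (by linarith) (by linarith)
  rcases le_or_gt (a * (1 - r * k)) (r * l) with h | h
  · -- use b ≤ 1
    have hF : 0 ≤ ((1 - r) * (m - l + 1) * (l - a) + m * k * r - m * (1 - r)) * (1 - r * k) := by
      have t1 : 0 ≤ (1 - r) * (m - l + 1) * (r * l - a * (1 - r * k)) := by
        apply mul_nonneg (mul_nonneg hr1'.le (by linarith)) (by linarith)
      have t2 : 0 ≤ (1 - r) * (1 - r * k - r) * ((m - l + 1) * l - m) := by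
        apply mul_nonneg (mul_nonneg hr1'.le (by nlinarith)) (by nlinarith)
      have t3 : 0 ≤ m * r * (k - 1) * (1 - r * (k + 1)) := by
        apply mul_nonneg (mul_nonneg (mul_nonneg hm0.le hr0.le) (by linarith)) (by linarith)
      nlinarith [t1, t2, t3]
    have hF' : 0 ≤ (1 - r) * (m - l + 1) * (l - a) + m * k * r - m * (1 - r) := by
      nlinarith [hF, hrk]
    nlinarith [mul_le_mul_of_nonneg_left hb1 (mul_nonneg hm0.le hr1'.le)]
  · -- use b * (a - r l) ≤ r k a
    have hden : 0 < a - r * l := by nlinarith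
    have hb' : b * (a - r * l) ≤ r * k * a := by nlinarith
    have key : m * k * r ^ 2 ≤ (1 - r) * (m - l + 1) * (a - r * l) := by
      have step1 : r ^ 2 * k * l ≤ (a - r * l) * (1 - r * k) := by nlinarith
      have hKmul : m * k * r ^ 2 * (1 - r * k) ≤ (1 - r) * (m - l + 1) * (a - r * l) * (1 - r * k) := by
        have s2 : (1 - r) * (m - l + 1) * (r ^ 2 * k * l) ≤
            (1 - r) * (m - l + 1) * ((a - r * l) * (1 - r * k)) := by
          apply mul_le_mul_of_nonneg_left step1 (mul_nonneg hr1'.le (by linarith))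
        have s3 : m * k * r ^ 2 * (1 - r * k) ≤ (1 - r) * (m - l + 1) * (r ^ 2 * k * l) := by
          have c0 : (0:ℝ) ≤ m * k * r ^ 2 :=
            mul_nonneg (mul_nonneg hm0.le (by linarith)) (sq_nonneg r)
          have c1 : (0:ℝ) ≤ k * r ^ 2 * (1 - r) :=
            mul_nonneg (mul_nonneg (by linarith) (sq_nonneg r)) hr1'.le
          have e1 : m * k * r ^ 2 * (1 - r * k) ≤ m * k * r ^ 2 * (1 - r) :=
            mul_le_mul_of_nonneg_left (by nlinarith) c0
          have e2 : m * (k * r ^ 2 * (1 - r)) ≤ ((m - l + 1) * l) * (k * r ^ 2 * (1 - r)) :=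
            mul_le_mul_of_nonneg_right (by nlinarith) c1
          nlinarith [e1, e2]
        nlinarith [s2, s3]
      nlinarith [hKmul, hrk]
    have hfinal : m * (1 - r) * b * (a - r * l) ≤
        ((1 - r) * (m - l + 1) * (l - a) + m * k * r) * (a - r * l) := by
      have u1 : m * (1 - r) * b * (a - r * l) ≤ m * (1 - r) * (r * k * a) := by
        have := mul_le_mul_of_nonneg_left hb' (mul_nonneg hm0.le hr1'.le)
        nlinarith [this]
      have u2 : 0 ≤ (l - a) * ((1 - r) * (m - l + 1) * (a - r * l) - m * k * r ^ 2) := by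
        apply mul_nonneg (by linarith) (by linarith)
      nlinarith [u1, u2]
    exact le_of_mul_le_mul_right hfinal hden

/-- Lower bound: every feasible point of the `L`-th outage region has objective ≥ D*. -/
lemma aux_lb (K M L : ℕ) (hK : 1 ≤ K) (hL : 1 ≤ L) (hLM : L ≤ M) (r : ℝ)
    (hr0 : 0 < r) (hr1 : r * ((K : ℝ) + 1) < 1)
    (α₁ : Fin L → ℝ) (α₂ : ℝ) (h1 : ∀ j, 0 ≤ α₁ j) (h2 : 0 ≤ α₂)
    (hC : (∑ j, max (1 - α₁ j) 0) * max (1 - α₂) 0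
        < r * ((K : ℝ) * (∑ j, max (1 - α₁ j) 0) + (L : ℝ) * max (1 - α₂) 0)) :
    (M : ℝ) * (1 - ((K : ℝ) + 1) * r) / (1 - r)
      ≤ (∑ j : Fin L, (2 * ((j : ℕ) : ℝ) + 1 + (M : ℝ) - (L : ℝ)) * α₁ j)
          + (M : ℝ) * α₂ := by
  have hK1 : (1 : ℝ) ≤ (K : ℝ) := by exact_mod_cast hK
  have hL1 : (1 : ℝ) ≤ (L : ℝ) := by exact_mod_cast hL
  have hLM1 : (L : ℝ) ≤ (M : ℝ) := by exact_mod_cast hLM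
  have hr' : 0 < 1 - r := by nlinarith
  set a := ∑ j, max (1 - α₁ j) 0 with hadef
  set b := max (1 - α₂) 0 with hbdef
  have ha0 : 0 ≤ a := Finset.sum_nonneg fun j _ => le_max_right _ _
  have haL : a ≤ (L : ℝ) := by
    calc a ≤ ∑ _j : Fin L, (1 : ℝ) :=
          Finset.sum_le_sum fun j _ => max_le (by linarith [h1 j]) zero_le_one
      _ = (L : ℝ) := by simp
  have hb0 : 0 ≤ b := le_max_right _ _
  have hb1 : b ≤ 1 := max_le (by linarith) zero_le_one
  have hC3 := aux_C3 (K : ℝ) (L : ℝ) (M : ℝ) r a b hK1 hL1 hLM1 hr0 hr1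
    ha0 haL hb0 hb1 hC.le
  -- objective lower bound
  have hsum : ((M : ℝ) - L + 1) * ((L : ℝ) - a)
      ≤ ∑ j : Fin L, (2 * ((j : ℕ) : ℝ) + 1 + (M : ℝ) - (L : ℝ)) * α₁ j := by
    have key : ∀ j : Fin L, ((M : ℝ) - L + 1) * (1 - max (1 - α₁ j) 0)
        ≤ (2 * ((j : ℕ) : ℝ) + 1 + (M : ℝ) - (L : ℝ)) * α₁ j := by
      intro j
      have hj : (0 : ℝ) ≤ ((j : ℕ) : ℝ) := Nat.cast_nonneg _
      rcases le_total (α₁ j) 1 with hc | hc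
      · rw [max_eq_left (by linarith)]
        nlinarith [h1 j]
      · rw [max_eq_right (by linarith)]
        nlinarith [h1 j]
    calc ((M : ℝ) - L + 1) * ((L : ℝ) - a)
        = ∑ j : Fin L, ((M : ℝ) - L + 1) * (1 - max (1 - α₁ j) 0) := by
          rw [← Finset.mul_sum, Finset.sum_sub_distrib]
          simp [hadef]
      _ ≤ _ := Finset.sum_le_sum fun j _ => key j
  have hM2 : (M : ℝ) * (1 - b) ≤ (M : ℝ) * α₂ := by
    have : 1 - b ≤ α₂ := by
      have := le_max_left (1 - α₂) 0
      rw [← hbdef] at this; linarith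
    exact mul_le_mul_of_nonneg_left this (by linarith)
  rw [div_le_iff₀ hr']
  have hobj : ((M : ℝ) - L + 1) * ((L : ℝ) - a) + (M : ℝ) * (1 - b)
      ≤ (∑ j : Fin L, (2 * ((j : ℕ) : ℝ) + 1 + (M : ℝ) - (L : ℝ)) * α₁ j)
          + (M : ℝ) * α₂ := by linarith
  nlinarith [mul_le_mul_of_nonneg_right hobj hr'.le, hC3]

/-- Theorem 2, matching of the dynamic DF lower bound with the converse
for `M ≥ 2K`: for `0 < r < 1/(K+1)`,
`d_DDF(r) = min_{1 ≤ L ≤ 2K} d^L(r) = M(1-(K+1)r)/(1-r)`, where `d^L(r)` is the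
infimum of `Σ_{j=1}^{L} (2j-1+M-L) α_{1,j} + M α₂` over ordered nonnegative
`α_{1,1} ≥ … ≥ α_{1,L} ≥ 0`, `α₂ ≥ 0` in the outage region
`S₁S₂ < r(K S₁ + L S₂)` with `S₁ = Σ_j (1-α_{1,j})⁺`, `S₂ = (1-α₂)⁺`. -/
theorem stmt8 (K M : ℕ) (hK : 1 ≤ K) (hM : 2 * K ≤ M) (r : ℝ)
    (hr0 : 0 < r) (hr1 : r < 1 / ((K : ℝ) + 1)) :
    sInf {d : ℝ | ∃ L : ℕ, 1 ≤ L ∧ L ≤ 2 * K ∧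
        d = sInf {e : ℝ | ∃ (α₁ : Fin L → ℝ) (α₂ : ℝ),
            (∀ i j : Fin L, i ≤ j → α₁ j ≤ α₁ i) ∧ (∀ j, 0 ≤ α₁ j) ∧ 0 ≤ α₂ ∧
            (∑ j, max (1 - α₁ j) 0) * max (1 - α₂) 0
              < r * ((K : ℝ) * (∑ j, max (1 - α₁ j) 0)
                  + (L : ℝ) * max (1 - α₂) 0) ∧
            e = (∑ j : Fin L, (2 * ((j : ℕ) : ℝ) + 1 + (M : ℝ) - (L : ℝ)) * α₁ j)
                  + (M : ℝ) * α₂}}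
      = (M : ℝ) * (1 - ((K : ℝ) + 1) * r) / (1 - r) := by
  have hK1 : (1 : ℝ) ≤ (K : ℝ) := by exact_mod_cast hK
  have hKpos : (0 : ℝ) < (K : ℝ) + 1 := by linarith
  have hr1' : r * ((K : ℝ) + 1) < 1 := by
    rw [lt_div_iff₀ hKpos] at hr1; linarith
  have hr' : 0 < 1 - r := by nlinarith
  have hM1 : 1 ≤ M := le_trans (by omega) hM
  have hM0 : (0 : ℝ) < (M : ℝ) := by exact_mod_cast Nat.pos_of_ne_zero (by omega)
  set D : ℝ := (M : ℝ) * (1 - ((K : ℝ) + 1) * r) / (1 - r) with hD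
  -- generic inner set facts
  have hinner_ne : ∀ L : ℕ, 1 ≤ L → L ≤ 2 * K →
      (M : ℝ) ∈ {e : ℝ | ∃ (α₁ : Fin L → ℝ) (α₂ : ℝ),
            (∀ i j : Fin L, i ≤ j → α₁ j ≤ α₁ i) ∧ (∀ j, 0 ≤ α₁ j) ∧ 0 ≤ α₂ ∧
            (∑ j, max (1 - α₁ j) 0) * max (1 - α₂) 0
              < r * ((K : ℝ) * (∑ j, max (1 - α₁ j) 0)
                  + (L : ℝ) * max (1 - α₂) 0) ∧
            e = (∑ j : Fin L, (2 * ((j : ℕ) : ℝ) + 1 + (M : ℝ) - (L : ℝ)) * α₁ j)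
                  + (M : ℝ) * α₂} := by
    intro L hL hL2
    refine ⟨fun _ => 0, 1, fun _ _ _ => le_refl _, fun _ => le_refl _, zero_le_one, ?_, ?_⟩
    · have hL1 : (0 : ℝ) < (L : ℝ) := by exact_mod_cast Nat.pos_of_ne_zero (by omega)
      simp only [sub_zero, sub_self, max_self, max_eq_left (le_refl (0:ℝ)), Finset.sum_const,
        Finset.card_univ, Fintype.card_fin, nsmul_eq_mul, mul_one]
      have : max (1 : ℝ) 0 = 1 := max_eq_left zero_le_one
      rw [this]
      have hL0 : (0:ℝ) < (L:ℝ) := hL1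
      have : (L:ℝ) * 1 * 0 = 0 := by ring
      rw [this]
      have : r * ((K:ℝ) * ((L:ℝ) * 1) + (L:ℝ) * 0) = r * (K:ℝ) * (L:ℝ) := by ring
      rw [this]
      positivity
    · simp
  have hlb : ∀ L : ℕ, 1 ≤ L → L ≤ 2 * K → ∀ e ∈ {e : ℝ | ∃ (α₁ : Fin L → ℝ) (α₂ : ℝ),
            (∀ i j : Fin L, i ≤ j → α₁ j ≤ α₁ i) ∧ (∀ j, 0 ≤ α₁ j) ∧ 0 ≤ α₂ ∧
            (∑ j, max (1 - α₁ j) 0) * max (1 - α₂) 0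
              < r * ((K : ℝ) * (∑ j, max (1 - α₁ j) 0)
                  + (L : ℝ) * max (1 - α₂) 0) ∧
            e = (∑ j : Fin L, (2 * ((j : ℕ) : ℝ) + 1 + (M : ℝ) - (L : ℝ)) * α₁ j)
                  + (M : ℝ) * α₂}, D ≤ e := by
    rintro L hL hL2 e ⟨α₁, α₂, _, hpos, hpos2, hcon, rfl⟩
    exact aux_lb K M L hK hL (by omega) r hr0 hr1' α₁ α₂ hpos hpos2 hcon
  apply IsLeast.csInf_eq
  constructor
  · -- D is in the outer set, via L = 1
    refine ⟨1, le_refl 1, by omega, ?_⟩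
    apply le_antisymm
    · -- D ≤ sInf inner
      exact le_csInf ⟨(M : ℝ), hinner_ne 1 (le_refl 1) (by omega)⟩ (hlb 1 (le_refl 1) (by omega))
    · -- sInf inner ≤ D
      apply le_of_forall_pos_le_add
      intro ε hε
      set δ : ℝ := min (ε / (M : ℝ)) (r * (K : ℝ) / (1 - r)) with hδdef
      have hδ0 : 0 < δ := lt_min (div_pos hε hM0) (div_pos (by positivity) hr')
      have hs2 : 0 ≤ r * (K : ℝ) / (1 - r) - δ := by
        have := min_le_right (ε / (M : ℝ)) (r * (K : ℝ) / (1 - r))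
        rw [← hδdef] at this; linarith
      have hcap : r * (K : ℝ) / (1 - r) ≤ 1 := by
        rw [div_le_one hr']; nlinarith
      have hmem : D + (M : ℝ) * δ ∈ {e : ℝ | ∃ (α₁ : Fin 1 → ℝ) (α₂ : ℝ),
            (∀ i j : Fin 1, i ≤ j → α₁ j ≤ α₁ i) ∧ (∀ j, 0 ≤ α₁ j) ∧ 0 ≤ α₂ ∧
            (∑ j, max (1 - α₁ j) 0) * max (1 - α₂) 0
              < r * ((K : ℝ) * (∑ j, max (1 - α₁ j) 0)
                  + ((1:ℕ) : ℝ) * max (1 - α₂) 0) ∧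
            e = (∑ j : Fin 1, (2 * ((j : ℕ) : ℝ) + 1 + (M : ℝ) - ((1:ℕ) : ℝ)) * α₁ j)
                  + (M : ℝ) * α₂} := by
        refine ⟨fun _ => 0, 1 - (r * (K : ℝ) / (1 - r) - δ),
          fun _ _ _ => le_refl _, fun _ => le_refl _, by linarith, ?_, ?_⟩
        · have e1 : (∑ j : Fin 1, max (1 - (0:ℝ)) 0) = 1 := by
            simp
          rw [e1]
          have e2 : max (1 - (1 - (r * (K : ℝ) / (1 - r) - δ))) 0
              = r * (K : ℝ) / (1 - r) - δ := by
            rw [sub_sub_cancel]; exact max_eq_left hs2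
          rw [e2]
          have hdiv : (r * (K : ℝ) / (1 - r)) * (1 - r) = r * (K : ℝ) :=
            div_mul_cancel₀ _ (ne_of_gt hr')
          push_cast
          nlinarith [hδ0, hr']
        · have e3 : (∑ j : Fin 1, (2 * ((j : ℕ) : ℝ) + 1 + (M : ℝ) - ((1:ℕ) : ℝ)) * (0:ℝ)) = 0 := by
            simp
          rw [e3, zero_add, hD]
          field_simp
          ring
      have hbdd : BddBelow {e : ℝ | ∃ (α₁ : Fin 1 → ℝ) (α₂ : ℝ),
            (∀ i j : Fin 1, i ≤ j → α₁ j ≤ α₁ i) ∧ (∀ j, 0 ≤ α₁ j) ∧ 0 ≤ α₂ ∧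
            (∑ j, max (1 - α₁ j) 0) * max (1 - α₂) 0
              < r * ((K : ℝ) * (∑ j, max (1 - α₁ j) 0)
                  + ((1:ℕ) : ℝ) * max (1 - α₂) 0) ∧
            e = (∑ j : Fin 1, (2 * ((j : ℕ) : ℝ) + 1 + (M : ℝ) - ((1:ℕ) : ℝ)) * α₁ j)
                  + (M : ℝ) * α₂} := ⟨D, hlb 1 (le_refl 1) (by omega)⟩
      have h1 := csInf_le hbdd hmem
      have hMδ : (M : ℝ) * δ ≤ ε := by
        have := min_le_left (ε / (M : ℝ)) (r * (K : ℝ) / (1 - r))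
        rw [← hδdef] at this
        calc (M : ℝ) * δ ≤ (M : ℝ) * (ε / (M : ℝ)) :=
              mul_le_mul_of_nonneg_left this hM0.le
          _ = ε := mul_div_cancel₀ _ (ne_of_gt hM0)
      -- coerce the set in h1: statement has (1 : ℝ) where we wrote ((1:ℕ):ℝ)
      simp only [Nat.cast_one] at h1 ⊢
      linarith
  · rintro d ⟨L, hL, hL2, rfl⟩
    exact le_csInf ⟨(M : ℝ), hinner_ne L hL hL2⟩ (hlb L hL hL2)
end
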